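/- Let f : {-1,1}^t → {-1,1} be a symmetric Boolean function with at least 2 sign changes (as a function of Hamming weight), expressed via thresholds 0 ≤ θ₁ < θ₂ < ⋯ < θ_s < θ_{s+1} = t with s ≥ 2, and suppose either t is even or θ₂ − θ₁ < t − 1. Then there exist natural numbers a, b such that f restricted to Hamming weight b equals 1, at weight a + b equals −1, and at weight 2a + b equals 1 (after possibly negating f), with b ≤ t, a + b ≤ t and 2a + b ≤ t. Consequently, for every x' ∈ {-1,1}² there exists x ∈ {-1,1}^t with f(x) = PARITY(x') and |x| = a|x'| + b. -/

import Mathlib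

open scoped Classical

noncomputable def sgnval (b : Bool) : ℝ := if b then 1 else -1

noncomputable def chi {n : ℕ} (S : Finset (Fin n)) (x : Fin n → Bool) : ℝ :=
  ∏ i ∈ S, sgnval (x i)

noncomputable def fourierCoef {n : ℕ} (f : (Fin n → Bool) → ℝ) (S : Finset (Fin n)) : ℝ :=
  (∑ x : Fin n → Bool, f x * chi S x) / 2 ^ n

noncomputable def negweight {t : ℕ} (x : Fin t → Bool) : ℕ :=
  (Finset.univ.filter (fun i => x i = false)).card

lemma card_filter_val_lt (t w : ℕ) (hw : w ≤ t) :
    ((Finset.univ : Finset (Fin t)).filter (fun i => i.val < w)).card = w := by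
  rw [← Finset.card_range w]
  apply Finset.card_nbij (fun i => i.val)
  · intro i hi; simp at hi ⊢; exact hi
  · intro i hi j hj h; exact Fin.val_injective h
  · intro n hn; simp at hn ⊢; exact ⟨⟨n, hn.trans_le hw⟩, hn, rfl⟩

lemma exists_point {t : ℕ} (w : ℕ) (hw : w ≤ t) :
    ∃ x : Fin t → Bool, negweight x = w := by
  refine ⟨fun i => decide (w ≤ i.val), ?_⟩
  unfold negweight
  have h : (Finset.univ.filter (fun i : Fin t => (decide (w ≤ i.val) : Bool) = false))
      = Finset.univ.filter (fun i : Fin t => i.val < w) := by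
    ext i; simp [Nat.not_le]
  rw [h, card_filter_val_lt t w hw]

lemma count_card (s : ℕ) (θ : ℕ → ℕ) (m j : ℕ) (hm : m ≤ s)
    (hlt : ∀ k, 1 ≤ k → k ≤ m → θ k < j)
    (hge : ∀ k, m < k → k ≤ s → j ≤ θ k) :
    ((Finset.Icc 1 s).filter (fun k => θ k < j)).card = m := by
  have h : (Finset.Icc 1 s).filter (fun k => θ k < j) = Finset.Icc 1 m := by
    ext k
    simp only [Finset.mem_filter, Finset.mem_Icc]
    constructor
    · rintro ⟨⟨h1, h2⟩, h3⟩
      refine ⟨h1, ?_⟩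
      by_contra h
      push_neg at h
      exact absurd h3 (not_lt.2 (hge k h h2))
    · rintro ⟨h1, h2⟩
      exact ⟨⟨h1, h2.trans hm⟩, hlt k h1 h2⟩
  rw [h, Nat.card_Icc]
  omega

lemma master {t s : ℕ} (hs : 2 ≤ s) (θ : ℕ → ℕ)
    (hmono : StrictMonoOn θ (Set.Icc 1 (s + 1))) (hlast : θ (s + 1) = t)
    (F : ℕ → ℝ)
    (hF : ∀ j, F j = (-1 : ℝ) ^ ((Finset.Icc 1 s).filter (fun k => θ k < j)).card)
    (f : (Fin t → Bool) → ℝ) (hf : ∀ x, f x = F (negweight x))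
    (m₀ a b : ℕ) (hm : m₀ + 2 ≤ s)
    (H1 : m₀ = 0 ∨ θ m₀ < b)
    (H2 : b ≤ θ (m₀ + 1))
    (H3 : θ (m₀ + 1) < a + b) (H4 : a + b ≤ θ (m₀ + 2))
    (H5 : θ (m₀ + 2) < 2 * a + b) (H6 : 2 * a + b ≤ θ (m₀ + 3)) :
    ∃ (ε : ℝ) (a b : ℕ), (ε = 1 ∨ ε = -1) ∧
      b ≤ t ∧ a + b ≤ t ∧ 2 * a + b ≤ t ∧
      ε * F b = 1 ∧ ε * F (a + b) = -1 ∧ ε * F (2 * a + b) = 1 ∧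
      ∀ x' : Fin 2 → Bool, ∃ x : Fin t → Bool,
        ε * f x = sgnval (x' 0) * sgnval (x' 1) ∧
        negweight x = a * negweight x' + b := by
  have hmn : ∀ k₁ k₂, 1 ≤ k₁ → k₁ ≤ k₂ → k₂ ≤ s + 1 → θ k₁ ≤ θ k₂ := by
    intro k₁ k₂ h1 h2 h3
    exact hmono.monotoneOn ⟨h1, by omega⟩ ⟨by omega, h3⟩ h2
  -- counts for the three points
  have c0 : ((Finset.Icc 1 s).filter (fun k => θ k < b)).card = m₀ := by
    apply count_card s θ m₀ b (by omega)
    · intro k hk1 hk2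
      rcases H1 with h | h
      · omega
      · exact lt_of_le_of_lt (hmn k m₀ hk1 hk2 (by omega)) h
    · intro k hk1 hk2
      exact H2.trans (hmn (m₀ + 1) k (by omega) (by omega) (by omega))
  have c1 : ((Finset.Icc 1 s).filter (fun k => θ k < a + b)).card = m₀ + 1 := by
    apply count_card s θ (m₀ + 1) (a + b) (by omega)
    · intro k hk1 hk2
      exact lt_of_le_of_lt (hmn k (m₀ + 1) hk1 hk2 (by omega)) H3
    · intro k hk1 hk2
      exact H4.trans (hmn (m₀ + 2) k (by omega) (by omega) (by omega))
  have c2 : ((Finset.Icc 1 s).filter (fun k => θ k < 2 * a + b)).card = m₀ + 2 := by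
    apply count_card s θ (m₀ + 2) (2 * a + b) (by omega)
    · intro k hk1 hk2
      exact lt_of_le_of_lt (hmn k (m₀ + 2) hk1 hk2 (by omega)) H5
    · intro k hk1 hk2
      exact H6.trans (hmn (m₀ + 3) k (by omega) (by omega) (by omega))
  have hbt : 2 * a + b ≤ t := by
    have := hmn (m₀ + 3) (s + 1) (by omega) (by omega) (by omega)
    omega
  set ε : ℝ := (-1 : ℝ) ^ m₀ with hε
  have hεpm : ε = 1 ∨ ε = -1 := by
    rcases Nat.even_or_odd m₀ with h | h
    · exact Or.inl (h.neg_one_pow)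
    · exact Or.inr (h.neg_one_pow)
  have e0 : ε * F b = 1 := by
    rw [hF, c0, hε]
    rcases Nat.even_or_odd m₀ with h | h
    · rw [h.neg_one_pow]; norm_num
    · rw [h.neg_one_pow]; norm_num
  have e1 : ε * F (a + b) = -1 := by
    rw [hF, c1, hε, pow_succ]
    rcases Nat.even_or_odd m₀ with h | h
    · rw [h.neg_one_pow]; norm_num
    · rw [h.neg_one_pow]; norm_num
  have e2 : ε * F (2 * a + b) = 1 := by
    rw [hF, c2, hε, pow_succ, pow_succ]
    rcases Nat.even_or_odd m₀ with h | h
    · rw [h.neg_one_pow]; norm_num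
    · rw [h.neg_one_pow]; norm_num
  refine ⟨ε, a, b, hεpm, by omega, by omega, hbt, e0, e1, e2, ?_⟩
  intro x'
  have hwle2 : negweight x' ≤ 2 := by
    unfold negweight
    have h := Finset.card_filter_le (Finset.univ : Finset (Fin 2))
      (fun i => x' i = false)
    simpa using h
  obtain ⟨x, hx⟩ := exists_point (a * negweight x' + b) (by
    calc a * negweight x' + b ≤ a * 2 + b :=
          Nat.add_le_add_right (Nat.mul_le_mul (le_refl a) hwle2) b
      _ ≤ t := by omega)
  refine ⟨x, ?_, hx⟩
  rw [hf, hx]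
  have hw2 : negweight x' = (if x' 0 then 0 else 1) + (if x' 1 then 0 else 1) := by
    unfold negweight
    rw [Finset.card_filter, Fin.sum_univ_two]
    cases h0 : x' 0 <;> cases h1 : x' 1 <;> simp
  cases h0 : x' 0 <;> cases h1 : x' 1
  · rw [h0, h1] at hw2; norm_num at hw2
    rw [hw2, show a * 2 + b = 2 * a + b from by ring, e2]
    norm_num [sgnval, h0, h1]
  · rw [h0, h1] at hw2; norm_num at hw2
    rw [hw2, show a * 1 + b = a + b from by ring, e1]
    norm_num [sgnval, h0, h1]
  · rw [h0, h1] at hw2; norm_num at hw2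
    rw [hw2, show a * 1 + b = a + b from by ring, e1]
    norm_num [sgnval, h0, h1]
  · rw [h0, h1] at hw2; norm_num at hw2
    rw [hw2, show a * 0 + b = b from by ring, e0]
    norm_num [sgnval, h0, h1]

theorem stmt10 {t s : ℕ} (hs : 2 ≤ s) (θ : ℕ → ℕ)
    (hmono : StrictMonoOn θ (Set.Icc 1 (s + 1))) (hlast : θ (s + 1) = t)
    (hcase : Even t ∨ θ 2 - θ 1 < t - 1)
    (F : ℕ → ℝ)
    (hF : ∀ j, F j = (-1 : ℝ) ^ ((Finset.Icc 1 s).filter (fun k => θ k < j)).card)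
    (f : (Fin t → Bool) → ℝ) (hf : ∀ x, f x = F (negweight x)) :
    ∃ (ε : ℝ) (a b : ℕ), (ε = 1 ∨ ε = -1) ∧
      b ≤ t ∧ a + b ≤ t ∧ 2 * a + b ≤ t ∧
      ε * F b = 1 ∧ ε * F (a + b) = -1 ∧ ε * F (2 * a + b) = 1 ∧
      ∀ x' : Fin 2 → Bool, ∃ x : Fin t → Bool,
        ε * f x = sgnval (x' 0) * sgnval (x' 1) ∧
        negweight x = a * negweight x' + b := by
  have h12 : θ 1 < θ 2 := hmono ⟨le_refl 1, by omega⟩ ⟨by omega, by omega⟩ (by omega)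
  have h23 : θ 2 < θ 3 := hmono ⟨by omega, by omega⟩ ⟨by omega, by omega⟩ (by omega)
  have h3t : θ 3 ≤ t := by
    rcases eq_or_lt_of_le (show 3 ≤ s + 1 by omega) with h | h
    · rw [← hlast, ← h]
    · rw [← hlast]
      exact le_of_lt (hmono ⟨by omega, by omega⟩ ⟨by omega, le_refl _⟩ h)
  set d := θ 2 - θ 1 with hd
  rcases Nat.even_or_odd d with hdeven | hdodd
  · obtain ⟨e, he⟩ := hdeven
    by_cases hθ1 : 1 ≤ θ 1
    · -- case B
      apply master hs θ hmono hlast F hF f hf 0 (d / 2 + 1) (θ 1 - 1) (by omega)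
      · exact Or.inl rfl
      all_goals (norm_num <;> omega)
    · have hθ10 : θ 1 = 0 := by omega
      by_cases hgap : θ 2 + 2 ≤ θ 3
      · -- case C
        apply master hs θ hmono hlast F hF f hf 0 (d / 2 + 1) 0 (by omega)
        · exact Or.inl rfl
        all_goals (norm_num <;> omega)
      · -- case D
        have hθ3 : θ 3 = θ 2 + 1 := by omega
        have hs3 : 3 ≤ s := by
          rcases Nat.lt_or_ge s 3 with h | h
          · exfalso
            have hs2 : s = 2 := by omega
            have ht3 : θ 3 = t := by rw [← hlast, hs2]
            rcases hcase with ⟨m, hm⟩ | h'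
            · omega
            · omega
          · exact h
        have h34 : θ 3 < θ 4 :=
          hmono ⟨by omega, by omega⟩ ⟨by omega, by omega⟩ (by omega)
        apply master hs θ hmono hlast F hF f hf 1 1 (θ 2) (by omega)
        · exact Or.inr (by omega)
        all_goals (norm_num <;> omega)
  · -- case A
    obtain ⟨e, he⟩ := hdodd
    apply master hs θ hmono hlast F hF f hf 0 ((e + 1)) (θ 1) (by omega)
    · exact Or.inl rfl
    all_goals (norm_num <;> omega)
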